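/- Let p > 3 be a prime. Then ^eΛ_{(1,1)}^p = {(1,1), (1,-3), (-3,1), (-3⁻¹,-3⁻¹)} and this set has cardinality exactly 4. -/

import Mathlib

/-- `Σ_p := {(i,j) ∈ (ℤ/pℤ)² : i ≠ 0, j ≠ 0, i+j+1 ≠ 0}`. -/
def SigmaP (p : ℕ) : Set (ZMod p × ZMod p) :=
  {ij | ij.1 ≠ 0 ∧ ij.2 ≠ 0 ∧ ij.1 + ij.2 + 1 ≠ 0}

/-- The set `^eΛ_{(i,j)}^p`, where `k := -(i+j+1)`. -/
def eLam (p : ℕ) (ij : ZMod p × ZMod p) : Finset (ZMod p × ZMod p) :=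
  let i := ij.1
  let j := ij.2
  let k := -(i + j + 1)
  {(i, j), (j, k), (k, i), (i⁻¹ * j, i⁻¹), (i⁻¹, i⁻¹ * k), (i⁻¹ * k, i⁻¹ * j),
   (j⁻¹, i * j⁻¹), (i * j⁻¹, j⁻¹ * k), (j⁻¹ * k, j⁻¹),
   (j * k⁻¹, i * k⁻¹), (i * k⁻¹, k⁻¹), (k⁻¹, j * k⁻¹)}

theorem stmt_10 (p : ℕ) [Fact p.Prime] (hp3 : 3 < p) :
    eLam p (1, 1) = ({(1, 1), (1, -3), (-3, 1), (-3⁻¹, -3⁻¹)} : Finset (ZMod p × ZMod p)) ∧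
    (eLam p (1, 1)).card = 4 := by
  have hp := (Fact.out : p.Prime)
  have hdvd : ∀ n : ℕ, 0 < n → n ∣ 24 → ((n : ZMod p) ≠ 0) := by
    intro n hn hn24 h
    rw [ZMod.natCast_eq_zero_iff] at h
    have h24 : p ∣ 24 := h.trans hn24
    have hle : p ≤ 24 := Nat.le_of_dvd (by norm_num) h24
    interval_cases p <;> revert hp h24 <;> norm_num
  have h3 : (3 : ZMod p) ≠ 0 := by have := hdvd 3 (by norm_num) (by norm_num); simpa using this
  have h4 : (4 : ZMod p) ≠ 0 := by have := hdvd 4 (by norm_num) (by norm_num); simpa using this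
  have h8 : (8 : ZMod p) ≠ 0 := by have := hdvd 8 (by norm_num) (by norm_num); simpa using this
  have hne1 : (-3 : ZMod p) ≠ 1 := by
    intro h; apply h4; linear_combination -h
  have hne0 : (-3 : ZMod p) ≠ 0 := by
    intro h; apply h3; linear_combination -h
  have hinv1 : (-3 : ZMod p)⁻¹ ≠ 1 := by
    rw [Ne, inv_eq_one]; exact hne1
  have hinv3 : (-3 : ZMod p)⁻¹ ≠ -3 := by
    intro h
    have h' := mul_inv_cancel₀ hne0 (a := (-3 : ZMod p))
    rw [h] at h'
    apply h8; linear_combination h'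
  have hA : (1 : ZMod p) ≠ -3⁻¹ := by
    intro h
    have h' : (3 : ZMod p)⁻¹ = -1 := by linear_combination h
    have h'' := mul_inv_cancel₀ h3 (a := (3 : ZMod p))
    rw [h'] at h''
    apply h4; linear_combination -h''
  have hB : (3 : ZMod p) ≠ 3⁻¹ := by
    intro h
    have h'' := mul_inv_cancel₀ h3 (a := (3 : ZMod p))
    rw [← h] at h''
    apply h8; linear_combination h''
  have heq : eLam p (1, 1) = ({(1, 1), (1, -3), (-3, 1), (-3⁻¹, -3⁻¹)} : Finset (ZMod p × ZMod p)) := by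
    ext x
    simp only [eLam, Finset.mem_insert, Finset.mem_singleton]
    norm_num [inv_neg]
    tauto
  refine ⟨heq, ?_⟩
  rw [heq]
  rw [Finset.card_insert_of_notMem, Finset.card_insert_of_notMem,
    Finset.card_insert_of_notMem, Finset.card_singleton] <;>
    simp [Prod.ext_iff, inv_neg] <;> tauto
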